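/- Let a ∈ ℝ^{d×d} be symmetric positive semidefinite, φ₀, φ₁ : ℝ^d → (0,∞) twice differentiable, θ ∈ [0,1], and φ = φ₀^θ φ₁^{1-θ}. Then at every point x, trace(a ∇²φ(x)) ≤ θ (φ(x)/φ₀(x)) trace(a ∇²φ₀(x)) + (1-θ) (φ(x)/φ₁(x)) trace(a ∇²φ₁(x)). -/

import Mathlib

/-- The `(i,j)` second partial derivative of `f` at `x`. -/
noncomputable def secondPartial (d : ℕ) (f : EuclideanSpace ℝ (Fin d) → ℝ)
    (x : EuclideanSpace ℝ (Fin d)) (i j : Fin d) : ℝ :=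
  fderiv ℝ (fun y => fderiv ℝ f y (EuclideanSpace.single j 1)) x (EuclideanSpace.single i 1)

lemma stmt5_diff_fd {d : ℕ} (f : EuclideanSpace ℝ (Fin d) → ℝ) (hf : ContDiff ℝ 2 f)
    (v : EuclideanSpace ℝ (Fin d)) :
    Differentiable ℝ (fun y => fderiv ℝ f y v) :=
  ((hf.fderiv_right (m := 1) (by norm_num)).clm_apply contDiff_const).differentiable (by norm_num)

lemma stmt5_sp_formula {d : ℕ} (φ₀ φ₁ : EuclideanSpace ℝ (Fin d) → ℝ)
    (hφ₀ : ContDiff ℝ 2 φ₀) (hφ₁ : ContDiff ℝ 2 φ₁)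
    (hpos₀ : ∀ x, 0 < φ₀ x) (hpos₁ : ∀ x, 0 < φ₁ x)
    (θ : ℝ) (x : EuclideanSpace ℝ (Fin d)) (i j : Fin d) :
    secondPartial d (fun y => φ₀ y ^ θ * φ₁ y ^ (1 - θ)) x i j =
      (φ₀ x ^ θ * φ₁ x ^ (1 - θ)) *
        ((θ * (fderiv ℝ φ₀ x (EuclideanSpace.single i 1) / φ₀ x)
            + (1 - θ) * (fderiv ℝ φ₁ x (EuclideanSpace.single i 1) / φ₁ x)) *
         (θ * (fderiv ℝ φ₀ x (EuclideanSpace.single j 1) / φ₀ x)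
            + (1 - θ) * (fderiv ℝ φ₁ x (EuclideanSpace.single j 1) / φ₁ x))
        + θ * (secondPartial d φ₀ x i j / φ₀ x
            - fderiv ℝ φ₀ x (EuclideanSpace.single i 1) * fderiv ℝ φ₀ x (EuclideanSpace.single j 1)
              / φ₀ x ^ 2)
        + (1 - θ) * (secondPartial d φ₁ x i j / φ₁ x
            - fderiv ℝ φ₁ x (EuclideanSpace.single i 1) * fderiv ℝ φ₁ x (EuclideanSpace.single j 1)
              / φ₁ x ^ 2)) := by
  have h0d : Differentiable ℝ φ₀ := hφ₀.differentiable (by norm_num)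
  have h1d : Differentiable ℝ φ₁ := hφ₁.differentiable (by norm_num)
  have hfun : (fun y : EuclideanSpace ℝ (Fin d) => φ₀ y ^ θ * φ₁ y ^ (1 - θ))
      = fun y => Real.exp (θ * Real.log (φ₀ y) + (1 - θ) * Real.log (φ₁ y)) := by
    funext y
    rw [Real.rpow_def_of_pos (hpos₀ y), Real.rpow_def_of_pos (hpos₁ y), ← Real.exp_add]
    ring_nf
  have hh : ∀ y, HasFDerivAt (fun z => θ * Real.log (φ₀ z) + (1 - θ) * Real.log (φ₁ z))
      (θ • ((φ₀ y)⁻¹ • fderiv ℝ φ₀ y) + (1 - θ) • ((φ₁ y)⁻¹ • fderiv ℝ φ₁ y)) y := fun y =>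
    (((h0d y).hasFDerivAt.log (hpos₀ y).ne').const_mul θ).add
      (((h1d y).hasFDerivAt.log (hpos₁ y).ne').const_mul (1 - θ))
  have hexp : ∀ y, HasFDerivAt
      (fun z => Real.exp (θ * Real.log (φ₀ z) + (1 - θ) * Real.log (φ₁ z)))
      (Real.exp (θ * Real.log (φ₀ y) + (1 - θ) * Real.log (φ₁ y)) •
        (θ • ((φ₀ y)⁻¹ • fderiv ℝ φ₀ y) + (1 - θ) • ((φ₁ y)⁻¹ • fderiv ℝ φ₁ y))) y :=
    fun y => (hh y).exp
  have hD1 : (fun y => fderiv ℝ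
        (fun z => Real.exp (θ * Real.log (φ₀ z) + (1 - θ) * Real.log (φ₁ z))) y
        (EuclideanSpace.single j 1))
      = fun y => Real.exp (θ * Real.log (φ₀ y) + (1 - θ) * Real.log (φ₁ y)) *
          (θ * ((φ₀ y)⁻¹ * fderiv ℝ φ₀ y (EuclideanSpace.single j 1))
            + (1 - θ) * ((φ₁ y)⁻¹ * fderiv ℝ φ₁ y (EuclideanSpace.single j 1))) := by
    funext y
    rw [(hexp y).fderiv]
    simp [smul_eq_mul]
    ring
  have hinv0 : HasFDerivAt (fun y => (φ₀ y)⁻¹)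
      ((-ContinuousLinearMap.mulLeftRight ℝ ℝ (φ₀ x)⁻¹ (φ₀ x)⁻¹).comp (fderiv ℝ φ₀ x)) x :=
    (hasFDerivAt_inv' (𝕜 := ℝ) (hpos₀ x).ne').comp x (h0d x).hasFDerivAt
  have hinv1 : HasFDerivAt (fun y => (φ₁ y)⁻¹)
      ((-ContinuousLinearMap.mulLeftRight ℝ ℝ (φ₁ x)⁻¹ (φ₁ x)⁻¹).comp (fderiv ℝ φ₁ x)) x :=
    (hasFDerivAt_inv' (𝕜 := ℝ) (hpos₁ x).ne').comp x (h1d x).hasFDerivAt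
  have hDj0 : HasFDerivAt (fun y => fderiv ℝ φ₀ y (EuclideanSpace.single j 1))
      (fderiv ℝ (fun y => fderiv ℝ φ₀ y (EuclideanSpace.single j 1)) x) x :=
    (stmt5_diff_fd φ₀ hφ₀ _ x).hasFDerivAt
  have hDj1 : HasFDerivAt (fun y => fderiv ℝ φ₁ y (EuclideanSpace.single j 1))
      (fderiv ℝ (fun y => fderiv ℝ φ₁ y (EuclideanSpace.single j 1)) x) x :=
    (stmt5_diff_fd φ₁ hφ₁ _ x).hasFDerivAt
  have htot := ((hexp x).mul
    ((((hinv0.mul hDj0).const_mul θ)).add (((hinv1.mul hDj1).const_mul (1 - θ)))))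
  rw [hfun]
  show fderiv ℝ (fun y => fderiv ℝ
      (fun z => Real.exp (θ * Real.log (φ₀ z) + (1 - θ) * Real.log (φ₁ z))) y
      (EuclideanSpace.single j 1)) x (EuclideanSpace.single i 1) = _
  have htot' : HasFDerivAt (fun y => Real.exp (θ * Real.log (φ₀ y) + (1 - θ) * Real.log (φ₁ y)) *
          (θ * ((φ₀ y)⁻¹ * fderiv ℝ φ₀ y (EuclideanSpace.single j 1))
            + (1 - θ) * ((φ₁ y)⁻¹ * fderiv ℝ φ₁ y (EuclideanSpace.single j 1)))) _ x := htot
  rw [hD1, htot'.fderiv]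
  have e0 : Real.exp (θ * Real.log (φ₀ x) + (1 - θ) * Real.log (φ₁ x))
      = φ₀ x ^ θ * φ₁ x ^ (1 - θ) := (congrFun hfun x).symm
  have hsp0 : fderiv ℝ (fun y => fderiv ℝ φ₀ y (EuclideanSpace.single j 1)) x
      (EuclideanSpace.single i 1) = secondPartial d φ₀ x i j := rfl
  have hsp1 : fderiv ℝ (fun y => fderiv ℝ φ₁ y (EuclideanSpace.single j 1)) x
      (EuclideanSpace.single i 1) = secondPartial d φ₁ x i j := rfl
  simp only [ContinuousLinearMap.add_apply, ContinuousLinearMap.smul_apply,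
    ContinuousLinearMap.comp_apply, ContinuousLinearMap.neg_apply,
    ContinuousLinearMap.mulLeftRight_apply, smul_eq_mul, hsp0, hsp1, e0, Pi.add_apply, Pi.mul_apply]
  have h0 : φ₀ x ≠ 0 := (hpos₀ x).ne'
  have h1 : φ₁ x ≠ 0 := (hpos₁ x).ne'
  field_simp
  ring

lemma stmt5_psd_sum {d : ℕ} (a : Matrix (Fin d) (Fin d) ℝ) (ha : a.PosSemidef)
    (z : Fin d → ℝ) : 0 ≤ ∑ i, ∑ j, a i j * (z i * z j) := by
  have h := ha.dotProduct_mulVec_nonneg z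
  simp only [dotProduct, Matrix.mulVec, Pi.star_apply, star_trivial] at h
  calc (0:ℝ) ≤ ∑ i, z i * ∑ j, a i j * z j := by
        convert h using 2
    _ = ∑ i, ∑ j, a i j * (z i * z j) := by
        refine Finset.sum_congr rfl fun i _ => ?_
        rw [Finset.mul_sum]
        exact Finset.sum_congr rfl fun jj _ => by ring

set_option maxHeartbeats 2000000 in
/-- Concavity-type inequality for `trace(a ∇²·)` along geometric interpolations
`φ = φ₀^θ φ₁^{1-θ}` of positive twice differentiable functions, for `a` symmetric
positive semidefinite. -/
theorem stmt_5 (d : ℕ) (a : Matrix (Fin d) (Fin d) ℝ) (ha : a.PosSemidef)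
    (φ₀ φ₁ : EuclideanSpace ℝ (Fin d) → ℝ)
    (hφ₀ : ContDiff ℝ 2 φ₀) (hφ₁ : ContDiff ℝ 2 φ₁)
    (hpos₀ : ∀ x, 0 < φ₀ x) (hpos₁ : ∀ x, 0 < φ₁ x)
    (θ : ℝ) (hθ : θ ∈ Set.Icc (0 : ℝ) 1)
    (φ : EuclideanSpace ℝ (Fin d) → ℝ)
    (hφ : ∀ x, φ x = φ₀ x ^ θ * φ₁ x ^ (1 - θ))
    (x : EuclideanSpace ℝ (Fin d)) :
    ∑ i, ∑ j, a i j * secondPartial d φ x i j ≤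
      θ * (φ x / φ₀ x) * ∑ i, ∑ j, a i j * secondPartial d φ₀ x i j +
      (1 - θ) * (φ x / φ₁ x) * ∑ i, ∑ j, a i j * secondPartial d φ₁ x i j := by
  obtain ⟨hθ0, hθ1⟩ := hθ
  have hφf : φ = fun y => φ₀ y ^ θ * φ₁ y ^ (1 - θ) := funext hφ
  subst hφf
  beta_reduce
  have hsym : ∀ i j, a j i = a i j := fun i j => by
    have := congrFun (congrFun ha.1 i) j
    simpa using this
  set u : Fin d → ℝ := fun k => fderiv ℝ φ₀ x (EuclideanSpace.single k 1) / φ₀ x with hu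
  set v : Fin d → ℝ := fun k => fderiv ℝ φ₁ x (EuclideanSpace.single k 1) / φ₁ x with hv
  set P : ℝ := φ₀ x ^ θ * φ₁ x ^ (1 - θ) with hP
  set Qu : ℝ := ∑ i, ∑ j, a i j * (u i * u j) with hQu
  set Qv : ℝ := ∑ i, ∑ j, a i j * (v i * v j) with hQv
  set Buv : ℝ := ∑ i, ∑ j, a i j * (u i * v j) with hBuv
  set Bvu : ℝ := ∑ i, ∑ j, a i j * (v i * u j) with hBvu
  set T₀ : ℝ := ∑ i, ∑ j, a i j * secondPartial d φ₀ x i j with hT0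
  set T₁ : ℝ := ∑ i, ∑ j, a i j * secondPartial d φ₁ x i j with hT1
  have hL : ∑ i, ∑ j, a i j * secondPartial d (fun y => φ₀ y ^ θ * φ₁ y ^ (1 - θ)) x i j
      = P * θ ^ 2 * Qu + P * (θ * (1 - θ)) * Buv + P * (θ * (1 - θ)) * Bvu
        + P * (1 - θ) ^ 2 * Qv + (-(θ * P)) * Qu + (-((1 - θ) * P)) * Qv
        + (θ * (P / φ₀ x)) * T₀ + ((1 - θ) * (P / φ₁ x)) * T₁ := by
    rw [hQu, hQv, hBuv, hBvu, hT0, hT1]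
    simp only [Finset.mul_sum, ← Finset.sum_add_distrib]
    refine Finset.sum_congr rfl fun i _ => Finset.sum_congr rfl fun j _ => ?_
    rw [stmt5_sp_formula φ₀ φ₁ hφ₀ hφ₁ hpos₀ hpos₁ θ x i j]
    simp only [hu, hv, hP]
    have h0 : φ₀ x ≠ 0 := (hpos₀ x).ne'
    have h1 : φ₁ x ≠ 0 := (hpos₁ x).ne'
    field_simp
    ring
  have hBB : Bvu = Buv := by
    rw [hBuv, hBvu, Finset.sum_comm]
    refine Finset.sum_congr rfl fun i _ => Finset.sum_congr rfl fun j _ => ?_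
    rw [hsym i j]
    ring
  have hquad : 0 ≤ ∑ i, ∑ j, a i j * ((u i - v i) * (u j - v j)) :=
    stmt5_psd_sum a ha _
  have hqe : ∑ i, ∑ j, a i j * ((u i - v i) * (u j - v j))
      = Qu + Qv - Buv - Bvu := by
    rw [hQu, hQv, hBuv, hBvu]
    calc ∑ i, ∑ j, a i j * ((u i - v i) * (u j - v j))
        = ∑ i, ∑ j, (a i j * (u i * u j) + a i j * (v i * v j)
            - a i j * (u i * v j) - a i j * (v i * u j)) :=
          Finset.sum_congr rfl fun i _ => Finset.sum_congr rfl fun j _ => by ring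
      _ = _ := by simp only [Finset.sum_add_distrib, Finset.sum_sub_distrib]
  have hPpos : 0 < P := by
    rw [hP]
    exact mul_pos (Real.rpow_pos_of_pos (hpos₀ x) θ) (Real.rpow_pos_of_pos (hpos₁ x) (1 - θ))
  have key : 0 ≤ P * (θ * ((1 - θ) * (Qu + Qv - 2 * Buv))) := by
    apply mul_nonneg hPpos.le
    apply mul_nonneg hθ0
    apply mul_nonneg (by linarith)
    have : 0 ≤ Qu + Qv - Buv - Bvu := hqe ▸ hquad
    rw [hBB] at this
    linarith
  rw [hL, hBB]
  linarith [key]
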